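/- Let U = {1, …, u} be a universe, 𝒮 a family of nonempty subsets of U, and κ ∈ ℕ. Construct the training data set over features d_1, …, d_u: for each S ∈ 𝒮, one red example e_S with e_S[d_i] = 0 for i ∈ S and e_S[d_i] = 1 for i ∉ S; and one blue example b with b[d_i] = 1 for all i ∈ U. Let T be the decision tree whose cuts c_1, …, c_u form a path, where c_i has feature d_i and threshold −1, the left child of every c_i is a leaf labeled red, the right child of c_i is c_{i+1} for i < u, and the right child of c_u is a leaf labeled blue. Then there exists H ⊆ U with |H| ≤ κ such that H ∩ S ≠ ∅ for every S ∈ 𝒮 if and only if the Threshold Adjustment instance ((E, λ), T, κ, 0) is a yes-instance. -/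

import Mathlib

/-- The two class labels. -/
def blue : Bool := true

def red : Bool := false

/-- Decision trees with features of type `α`: each leaf carries a class label,
each internal node (a *cut*) carries a feature and a real threshold. -/
inductive DTree (α : Type) : Type
  | leaf (label : Bool) : DTree α
  | node (feat : α) (thr : ℝ) (left right : DTree α) : DTree α

namespace DTree

/-- The class that the tree assigns to the example `e`. -/
noncomputable def classify {α : Type} : DTree α → (α → ℝ) → Bool
  | leaf c, _ => c
  | node f x l r, e => if e f ≤ x then l.classify e else r.classify e

end DTree

/-- The number of errors of `T` on the training data set `(E, lab)`. -/
noncomputable def errorCount {α ι : Type} [Fintype ι] (E : ι → α → ℝ)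
    (lab : ι → Bool) (T : DTree α) : ℕ :=
  (Finset.univ.filter (fun i => T.classify (E i) ≠ lab i)).card

/-- `T'` has the same shape as `T` and the same feature at every cut; thresholds and
leaf labels may differ. -/
def SameShapeFeat {α : Type} : DTree α → DTree α → Prop
  | DTree.leaf _, DTree.leaf _ => True
  | DTree.node f _ l r, DTree.node f' _ l' r' =>
      f = f' ∧ SameShapeFeat l l' ∧ SameShapeFeat r r'
  | _, _ => False

/-- The number of cuts at which the thresholds of the two (same-shaped) trees
differ. -/
noncomputable def adjCost {α : Type} : DTree α → DTree α → ℕ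
  | DTree.node _ x l r, DTree.node _ x' l' r' =>
      (if x = x' then 0 else 1) + adjCost l l' + adjCost r r'
  | _, _ => 0

/-- The Threshold Adjustment instance `((E, lab), T, k, t)` is a yes-instance:
by performing threshold adjustments on at most `k` cuts of `T` and additionally
relabeling the leaves of `T` arbitrarily, one can obtain a decision tree with at
most `t` errors on `(E, lab)`. -/
def TAYes {α ι : Type} [Fintype ι] (E : ι → α → ℝ) (lab : ι → Bool)
    (T : DTree α) (k t : ℕ) : Prop :=
  ∃ T' : DTree α, SameShapeFeat T T' ∧ adjCost T T' ≤ k ∧ errorCount E lab T' ≤ t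

/-- The path-shaped decision tree whose cuts use the listed features (in order), all
with threshold `thr`; the left child of every cut is a red leaf, the right child of
the last cut is a blue leaf. -/
def chainTree {α : Type} (thr : ℝ) : List α → DTree α
  | [] => DTree.leaf blue
  | f :: fs => DTree.node f thr (DTree.leaf red) (chainTree thr fs)



def gchain {α : Type} : List (α × ℝ × Bool) → Bool → DTree α
  | [], c => DTree.leaf c
  | (f, x, l) :: L, c => DTree.node f x (DTree.leaf l) (gchain L c)

lemma shape_gchain {α : Type} (thr : ℝ) :
    ∀ (fs : List α) (T' : DTree α), SameShapeFeat (chainTree thr fs) T' →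
      ∃ L c, T' = gchain L c ∧ L.map Prod.fst = fs := by
  intro fs
  induction fs with
  | nil =>
    intro T' h
    cases T' with
    | leaf c => exact ⟨[], c, rfl, rfl⟩
    | node f x l r => exact absurd h (by simp [chainTree, SameShapeFeat])
  | cons f fs ih =>
    intro T' h
    cases T' with
    | leaf c => exact absurd h (by simp [chainTree, SameShapeFeat])
    | node f' x l r =>
      simp only [chainTree, SameShapeFeat] at h
      obtain ⟨hf, hl, hr⟩ := h
      cases l with
      | node _ _ _ _ => exact absurd hl (by simp [SameShapeFeat])
      | leaf b =>
        obtain ⟨L, c, rfl, hmap⟩ := ih r hr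
        exact ⟨(f', x, b) :: L, c, rfl, by simp [hmap, hf]⟩

lemma sameShape_gchain {α : Type} (thr : ℝ) :
    ∀ (L : List (α × ℝ × Bool)) (c : Bool),
      SameShapeFeat (chainTree thr (L.map Prod.fst)) (gchain L c) := by
  intro L
  induction L with
  | nil => intro c; simp [chainTree, gchain, SameShapeFeat]
  | cons p L ih =>
    intro c
    obtain ⟨f, x, b⟩ := p
    simpa [chainTree, gchain, SameShapeFeat] using ih c

lemma adjCost_gchain {α : Type} (thr : ℝ) :
    ∀ (L : List (α × ℝ × Bool)) (c : Bool),
      adjCost (chainTree thr (L.map Prod.fst)) (gchain L c)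
        = (L.filter (fun p => thr ≠ p.2.1)).length := by
  intro L
  induction L with
  | nil => intro c; simp [chainTree, gchain, adjCost]
  | cons p L ih =>
    intro c
    obtain ⟨f, x, b⟩ := p
    simp only [List.map_cons, chainTree, gchain, adjCost, ih c, List.filter_cons]
    by_cases hx : x = thr
    · simp [hx, adjCost]
    · have hx' : ¬ thr = x := fun h => hx h.symm
      simp [hx', adjCost, Nat.add_comm]

lemma classify_gchain_last {α : Type} (L : List (α × ℝ × Bool)) (c : Bool) (e : α → ℝ)
    (h : ∀ p ∈ L, ¬ e p.1 ≤ p.2.1) : (gchain L c).classify e = c := by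
  induction L with
  | nil => rfl
  | cons p L ih =>
    obtain ⟨f, x, b⟩ := p
    have h1 := h (f, x, b) (by simp)
    simp only [gchain, DTree.classify, if_neg h1]
    exact ih (fun p hp => h p (by simp [hp]))

lemma classify_gchain_red {α : Type} (L : List (α × ℝ × Bool)) (c : Bool) (e : α → ℝ)
    (hl : ∀ p ∈ L, p.2.2 = red) (h : ∃ p ∈ L, e p.1 ≤ p.2.1) :
    (gchain L c).classify e = red := by
  induction L with
  | nil => simp at h
  | cons p L ih =>
    obtain ⟨f, x, b⟩ := p
    simp only [gchain, DTree.classify]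
    by_cases hfx : e f ≤ x
    · simp only [if_pos hfx, DTree.classify]
      exact hl (f, x, b) (by simp)
    · rw [if_neg hfx]
      apply ih (fun p hp => hl p (by simp [hp]))
      obtain ⟨q, hq, hqle⟩ := h
      rcases List.mem_cons.1 hq with rfl | hq'
      · exact absurd hqle hfx
      · exact ⟨q, hq', hqle⟩

lemma classify_gchain_congr {α : Type} (L : List (α × ℝ × Bool)) (c : Bool) (e b : α → ℝ)
    (h : ∀ p ∈ L, (e p.1 ≤ p.2.1 ↔ b p.1 ≤ p.2.1)) :
    (gchain L c).classify e = (gchain L c).classify b := by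
  induction L with
  | nil => rfl
  | cons p L ih =>
    obtain ⟨f, x, bb⟩ := p
    have h1 := h (f, x, bb) (by simp)
    simp only [gchain, DTree.classify]
    by_cases hfx : e f ≤ x
    · rw [if_pos hfx, if_pos (h1.1 hfx)]
    · rw [if_neg hfx, if_neg (fun hb => hfx (h1.2 hb))]
      exact ih (fun p hp => h p (by simp [hp]))

lemma length_filter_finRange (u : ℕ) (H : Finset (Fin u)) :
    ((List.finRange u).filter (fun i => i ∈ H)).length = H.card := by
  rw [← List.toFinset_card_of_nodup ((List.nodup_finRange u).filter _)]
  congr 1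
  ext i
  simp

lemma sameShape_gchain' {α : Type} (thr : ℝ) (L : List (α × ℝ × Bool)) (c : Bool)
    (fs : List α) (h : L.map Prod.fst = fs) :
    SameShapeFeat (chainTree thr fs) (gchain L c) := h ▸ sameShape_gchain thr L c

lemma adjCost_gchain' {α : Type} (thr : ℝ) (L : List (α × ℝ × Bool)) (c : Bool)
    (fs : List α) (h : L.map Prod.fst = fs) :
    adjCost (chainTree thr fs) (gchain L c)
      = (L.filter (fun p => thr ≠ p.2.1)).length := h ▸ adjCost_gchain thr L c


/-- Hitting-set reduction. For a family `𝒮` of nonempty subsets of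
`U = Fin u`: one red example per `S ∈ 𝒮` (value `0` on features in `S`, value `1`
elsewhere), one blue example with all values `1`; the tree is the path of cuts
`c_1, …, c_u`, where `c_i` has feature `d_i` and threshold `−1`. Then a hitting set of
size at most `κ` exists if and only if `((E, λ), T, κ, 0)` is a yes-instance of
Threshold Adjustment. -/
theorem stmt11 (u : ℕ) (𝒮 : Finset (Finset (Fin u))) (h𝒮 : ∀ S ∈ 𝒮, S.Nonempty)
    (κ : ℕ) :
    (∃ H : Finset (Fin u), H.card ≤ κ ∧ ∀ S ∈ 𝒮, (H ∩ S).Nonempty) ↔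
    TAYes (ι := {S : Finset (Fin u) // S ∈ 𝒮} ⊕ Unit)
      (Sum.elim (fun S (i : Fin u) => if i ∈ S.1 then (0 : ℝ) else 1)
        (fun _ (_ : Fin u) => 1))
      (Sum.elim (fun _ => red) (fun _ => blue))
      (chainTree (-1) (List.finRange u)) κ 0 := by
  classical
  constructor
  · rintro ⟨H, hcard, hhit⟩
    set L : List (Fin u × ℝ × Bool) :=
      (List.finRange u).map (fun i => (i, if i ∈ H then (1/2 : ℝ) else -1, red)) with hL
    have hmap : L.map Prod.fst = List.finRange u := by
      simp only [hL, List.map_map]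
      have hid : (Prod.fst ∘ fun i : Fin u => (i, if i ∈ H then (1/2:ℝ) else -1, red))
          = id := rfl
      rw [hid, List.map_id]
    refine ⟨gchain L blue, sameShape_gchain' _ _ _ _ hmap, ?_, ?_⟩
    · rw [adjCost_gchain' _ _ _ _ hmap, hL, List.filter_map, List.length_map]
      have hfc : ((List.finRange u).filter
            ((fun p => (-1:ℝ) ≠ p.2.1) ∘ fun i => (i, if i ∈ H then (1/2:ℝ) else -1, red))).length
          = ((List.finRange u).filter (fun i => i ∈ H)).length := by
        congr 1
        apply List.filter_congr
        intro i _
        by_cases h : i ∈ H <;> simp [h] <;> norm_num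
      rw [hfc, length_filter_finRange]
      exact hcard
    · rw [Nat.le_zero, errorCount, Finset.card_eq_zero, Finset.filter_eq_empty_iff]
      rintro (⟨S, hS⟩ | ⟨⟩) -
      · simp only [ne_eq, not_not, Sum.elim_inl]
        apply classify_gchain_red
        · intro p hp
          simp only [hL, List.mem_map] at hp
          obtain ⟨i, -, rfl⟩ := hp
          rfl
        · obtain ⟨i, hi⟩ := hhit S hS
          rw [Finset.mem_inter] at hi
          refine ⟨(i, if i ∈ H then (1/2:ℝ) else -1, red),
            List.mem_map.2 ⟨i, by simp, rfl⟩, ?_⟩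
          simp only [hi.1, hi.2, if_pos]
          norm_num
      · simp only [ne_eq, not_not, Sum.elim_inr]
        apply classify_gchain_last
        intro p hp
        simp only [hL, List.mem_map] at hp
        obtain ⟨i, -, rfl⟩ := hp
        by_cases h : i ∈ H <;> simp [h] <;> norm_num
  · rintro ⟨T', hshape, hcost, herr⟩
    obtain ⟨L, c, rfl, hmap⟩ := shape_gchain (-1) _ T' hshape
    rw [Nat.le_zero, errorCount, Finset.card_eq_zero, Finset.filter_eq_empty_iff] at herr
    have hred : ∀ (S : Finset (Fin u)) (hS : S ∈ 𝒮),
        (gchain L c).classify (fun i => if i ∈ S then (0:ℝ) else 1) = red := by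
      intro S hS
      have := herr (Finset.mem_univ (Sum.inl ⟨S, hS⟩))
      simpa using this
    have hblue : (gchain L c).classify (fun _ => (1:ℝ)) = blue := by
      have := herr (Finset.mem_univ (Sum.inr ()))
      simpa using this
    refine ⟨((L.filter (fun p => (0:ℝ) ≤ p.2.1)).map Prod.fst).toFinset, ?_, ?_⟩
    · calc ((L.filter (fun p => (0:ℝ) ≤ p.2.1)).map Prod.fst).toFinset.card
          ≤ ((L.filter (fun p => (0:ℝ) ≤ p.2.1)).map Prod.fst).length :=
            List.toFinset_card_le _
        _ = (L.filter (fun p => (0:ℝ) ≤ p.2.1)).length := List.length_map _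
        _ ≤ (L.filter (fun p => (-1:ℝ) ≠ p.2.1)).length := by
            rw [← List.countP_eq_length_filter, ← List.countP_eq_length_filter]
            apply List.countP_mono_left
            intro p _ hp
            simp only [decide_eq_true_eq] at hp ⊢
            intro heq
            rw [← heq] at hp
            linarith
        _ ≤ κ := by rw [← adjCost_gchain' (-1) L c _ hmap]; exact hcost
    · intro S hS
      by_contra hemp
      rw [Finset.not_nonempty_iff_eq_empty] at hemp
      have key : ∀ p ∈ L,
          ((fun i => if i ∈ S then (0:ℝ) else 1) p.1 ≤ p.2.1 ↔ (fun _ => (1:ℝ)) p.1 ≤ p.2.1) := by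
        intro p hp
        by_cases hpS : p.1 ∈ S
        · have h0 : ¬ (0:ℝ) ≤ p.2.1 := by
            intro h0
            have hpH : p.1 ∈ ((L.filter (fun p => (0:ℝ) ≤ p.2.1)).map Prod.fst).toFinset :=
              List.mem_toFinset.2 (List.mem_map.2
                ⟨p, List.mem_filter.2 ⟨hp, by simpa using h0⟩, rfl⟩)
            have : p.1 ∈ ((L.filter (fun p => (0:ℝ) ≤ p.2.1)).map Prod.fst).toFinset ∩ S :=
              Finset.mem_inter.2 ⟨hpH, hpS⟩
            rw [hemp] at this
            exact absurd this (Finset.notMem_empty _)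
          simp only [if_pos hpS]
          constructor
          · intro h; exact absurd h h0
          · intro h1; exact absurd (le_trans (by norm_num) h1) h0
        · simp [hpS]
      have hcongr := classify_gchain_congr L c (fun i => if i ∈ S then (0:ℝ) else 1) (fun _ => (1:ℝ)) key
      rw [hred S hS, hblue] at hcongr
      exact absurd hcongr (by simp [red, blue])
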